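/- (Example 1.1, closure of the Vessiot/Maurer–Cartan equations) Let U ⊆ ℝⁿ be a nonempty open set and let ω be a coframe on U satisfying the Maurer–Cartan (Vessiot) structure equations with structure constants c = (c^τ_{ρσ}), c^τ_{ρσ} = −c^τ_{σρ}. Then c satisfies the quadratic Jacobi relations: Σ_μ ( c^λ_{μρ} c^μ_{στ} + c^λ_{μσ} c^μ_{τρ} + c^λ_{μτ} c^μ_{ρσ} ) = 0 for all indices λ, ρ, σ, τ. -/

import Mathlib

/-- The `i`-th partial derivative of a function `f : ℝⁿ → ℝ` at `x`. -/
noncomputable def pd {n : ℕ} (i : Fin n) (f : (Fin n → ℝ) → ℝ) (x : Fin n → ℝ) : ℝ :=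
  fderiv ℝ f x (Pi.single i 1)

section helpers

variable {n : ℕ} {f g : (Fin n → ℝ) → ℝ} {x : Fin n → ℝ} {i k : Fin n}

lemma pd_congr (h : f =ᶠ[nhds x] g) : pd i f x = pd i g x := by
  unfold pd; rw [Filter.EventuallyEq.fderiv_eq h]

lemma pd_sub (hf : DifferentiableAt ℝ f x) (hg : DifferentiableAt ℝ g x) :
    pd i (fun y => f y - g y) x = pd i f x - pd i g x := by
  unfold pd; rw [fderiv_fun_sub hf hg]; simp

lemma pd_sum {ι : Type*} {s : Finset ι} {F : ι → (Fin n → ℝ) → ℝ}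
    (h : ∀ b ∈ s, DifferentiableAt ℝ (F b) x) :
    pd i (fun y => ∑ b ∈ s, F b y) x = ∑ b ∈ s, pd i (F b) x := by
  unfold pd; rw [fderiv_fun_sum h]; simp

lemma pd_const_mul (a : ℝ) (hf : DifferentiableAt ℝ f x) :
    pd i (fun y => a * f y) x = a * pd i f x := by
  unfold pd; rw [fderiv_const_mul hf]; simp

lemma pd_mul (hf : DifferentiableAt ℝ f x) (hg : DifferentiableAt ℝ g x) :
    pd i (fun y => f y * g y) x = pd i f x * g x + f x * pd i g x := by
  unfold pd; rw [fderiv_fun_mul hf hg]; simp; ring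

lemma pd_diffAt (hf : ContDiffAt ℝ 2 f x) : DifferentiableAt ℝ (pd k f) x := by
  have h1 : ContDiffAt ℝ 1 (fderiv ℝ f) x := hf.fderiv_right (by norm_num)
  have h2 : ContDiffAt ℝ 1 (fun y => fderiv ℝ f y (Pi.single k 1)) x :=
    h1.clm_apply contDiffAt_const
  exact h2.differentiableAt one_ne_zero

lemma pd_symm (hf : ContDiffAt ℝ 2 f x) : pd i (pd k f) x = pd k (pd i f) x := by
  have hsym := hf.isSymmSndFDerivAt (by simp [minSmoothness_of_isRCLikeNormedField])
  have hd : DifferentiableAt ℝ (fderiv ℝ f) x :=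
    (hf.fderiv_right (by norm_num)).differentiableAt one_ne_zero
  have key : ∀ v : Fin n → ℝ, fderiv ℝ (fun y => fderiv ℝ f y v) x
      = (fderiv ℝ (fderiv ℝ f) x).flip v := by
    intro v
    have h := fderiv_clm_apply (c := fderiv ℝ f) (u := fun _ => v) hd (differentiableAt_const v)
    simpa using h
  show fderiv ℝ (pd k f) x (Pi.single i 1) = fderiv ℝ (pd i f) x (Pi.single k 1)
  have e1 : pd k f = fun y => fderiv ℝ f y (Pi.single k 1) := rfl
  have e2 : pd i f = fun y => fderiv ℝ f y (Pi.single i 1) := rfl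
  rw [e1, e2, key, key]
  exact hsym _ _

lemma cancel {M N : Matrix (Fin n) (Fin n) ℝ} (hMN : M * N = 1) {f : Fin n → ℝ}
    (hf : ∀ i, ∑ a, f a * M a i = 0) (a : Fin n) : f a = 0 := by
  have key : ∑ i, (∑ b, f b * M b i) * N i a = f a := by
    have e1 : ∑ i, (∑ b, f b * M b i) * N i a = ∑ i, ∑ b, f b * (M b i * N i a) := by
      refine Finset.sum_congr rfl fun i _ => ?_
      rw [Finset.sum_mul]
      exact Finset.sum_congr rfl fun b _ => by ring
    rw [e1, Finset.sum_comm]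
    have e2 : ∀ b, (∑ i, f b * (M b i * N i a)) = f b * ∑ i, M b i * N i a := fun b =>
      (Finset.mul_sum _ _ _).symm
    simp only [e2]
    have h1 : ∀ b, (∑ i, M b i * N i a) = (M * N) b a := fun b => (Matrix.mul_apply).symm
    simp only [h1, hMN, Matrix.one_apply]
    simp
  rw [← key]
  simp [hf]

lemma sum_rot (F : Fin n → Fin n → Fin n → ℝ) :
    ∑ a, ∑ b, ∑ e, F a b e = ∑ a, ∑ b, ∑ e, F e a b := by
  rw [Finset.sum_comm]
  exact Finset.sum_congr rfl fun b _ => Finset.sum_comm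

lemma sum4_swap (F : Fin n → Fin n → Fin n → Fin n → ℝ) :
    ∑ ρ, ∑ σ, ∑ a, ∑ b, F ρ σ a b = ∑ a, ∑ b, ∑ σ, ∑ ρ, F ρ σ a b := by
  calc ∑ ρ, ∑ σ, ∑ a, ∑ b, F ρ σ a b
      = ∑ σ, ∑ ρ, ∑ a, ∑ b, F ρ σ a b := Finset.sum_comm
    _ = ∑ σ, ∑ a, ∑ ρ, ∑ b, F ρ σ a b :=
        Finset.sum_congr rfl fun _ _ => Finset.sum_comm
    _ = ∑ σ, ∑ a, ∑ b, ∑ ρ, F ρ σ a b :=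
        Finset.sum_congr rfl fun _ _ => Finset.sum_congr rfl fun _ _ => Finset.sum_comm
    _ = ∑ a, ∑ σ, ∑ b, ∑ ρ, F ρ σ a b := Finset.sum_comm
    _ = ∑ a, ∑ b, ∑ σ, ∑ ρ, F ρ σ a b :=
        Finset.sum_congr rfl fun _ _ => Finset.sum_comm

lemma reorg (c : Fin n → Fin n → Fin n → ℝ) (τ : Fin n) (u v w : Fin n → ℝ) :
    (∑ ρ, ∑ σ, c τ ρ σ * ((∑ a, ∑ b, c ρ a b * u a * v b) * w σ))
    = ∑ a, ∑ b, ∑ e, (∑ ρ, c τ ρ e * c ρ a b) * u a * v b * w e := by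
  have step1 : (∑ ρ, ∑ σ, c τ ρ σ * ((∑ a, ∑ b, c ρ a b * u a * v b) * w σ))
      = ∑ ρ, ∑ σ, ∑ a, ∑ b, c τ ρ σ * c ρ a b * u a * v b * w σ := by
    refine Finset.sum_congr rfl fun ρ _ => Finset.sum_congr rfl fun σ _ => ?_
    rw [Finset.sum_mul, Finset.mul_sum]
    refine Finset.sum_congr rfl fun a _ => ?_
    rw [Finset.sum_mul, Finset.mul_sum]
    refine Finset.sum_congr rfl fun b _ => ?_
    ring
  rw [step1, sum4_swap]
  refine Finset.sum_congr rfl fun a _ => Finset.sum_congr rfl fun b _ =>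
    Finset.sum_congr rfl fun e _ => ?_
  simp only [Finset.sum_mul]

end helpers

/-- The Jacobi expression. -/
noncomputable def jacExpr {n : ℕ} (c : Fin n → Fin n → Fin n → ℝ) (l a b e : Fin n) : ℝ :=
  ∑ μ, (c l μ a * c μ b e + c l μ b * c μ e a + c l μ e * c μ a b)

/-- Example 1.1, closure of the Vessiot/Maurer–Cartan equations: if a
coframe `ω` (a `C²` field of invertible matrices) on a nonempty open set `U ⊆ ℝⁿ` satisfies
the Maurer–Cartan (Vessiot) structure equations with skew-symmetric structure constants `c`,
then `c` satisfies the quadratic Jacobi relations. -/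
theorem maurer_cartan_implies_jacobi {n : ℕ} (hn : 1 ≤ n)
    (U : Set (Fin n → ℝ)) (hUopen : IsOpen U) (hUne : U.Nonempty)
    (ω : Fin n → Fin n → (Fin n → ℝ) → ℝ)
    (hω : ∀ τ i, ContDiffOn ℝ 2 (ω τ i) U)
    (hωinv : ∀ x ∈ U, IsUnit (Matrix.of fun τ i => ω τ i x))
    (c : Fin n → Fin n → Fin n → ℝ)
    (hcskew : ∀ τ ρ σ, c τ ρ σ = -c τ σ ρ)
    (hMC : ∀ x ∈ U, ∀ τ i j,
      pd i (ω τ j) x - pd j (ω τ i) x = ∑ ρ, ∑ σ, c τ ρ σ * ω ρ i x * ω σ j x) :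
    ∀ lam ρ σ τ : Fin n,
      ∑ μ, (c lam μ ρ * c μ σ τ + c lam μ σ * c μ τ ρ + c lam μ τ * c μ ρ σ) = 0 := by
  intro l p q r
  obtain ⟨x, hx⟩ := hUne
  have hC2 : ∀ τ i, ContDiffAt ℝ 2 (ω τ i) x := fun τ i =>
    (hω τ i).contDiffAt (hUopen.mem_nhds hx)
  have hd1 : ∀ τ i, DifferentiableAt ℝ (ω τ i) x := fun τ i =>
    (hC2 τ i).differentiableAt two_ne_zero
  -- Step 2: differentiate the MC equations.
  have step2 : ∀ τ i j k, pd k (pd i (ω τ j)) x - pd k (pd j (ω τ i)) x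
      = ∑ ρ, ∑ σ, c τ ρ σ * (pd k (ω ρ i) x * ω σ j x + ω ρ i x * pd k (ω σ j) x) := by
    intro τ i j k
    have hFG : (fun y => pd i (ω τ j) y - pd j (ω τ i) y)
        =ᶠ[nhds x] fun y => ∑ ρ, ∑ σ, c τ ρ σ * ω ρ i y * ω σ j y := by
      filter_upwards [hUopen.mem_nhds hx] with y hy using hMC y hy τ i j
    have h1 := pd_congr (i := k) hFG
    rw [pd_sub (pd_diffAt (hC2 τ j)) (pd_diffAt (hC2 τ i))] at h1
    rw [h1]
    rw [pd_sum (fun ρ _ => by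
      exact DifferentiableAt.fun_sum fun σ _ => ((hd1 ρ i).const_mul _).mul (hd1 σ j))]
    refine Finset.sum_congr rfl fun ρ _ => ?_
    rw [pd_sum (fun σ _ => ((hd1 ρ i).const_mul _).fun_mul (hd1 σ j))]
    refine Finset.sum_congr rfl fun σ _ => ?_
    rw [pd_mul ((hd1 ρ i).const_mul _) (hd1 σ j), pd_const_mul _ (hd1 ρ i)]
    ring
  -- Step 3: cyclic sum vanishes by symmetry of second derivatives.
  have hcyc : ∀ τ i j k,
      (∑ ρ, ∑ σ, c τ ρ σ * (pd k (ω ρ i) x * ω σ j x + ω ρ i x * pd k (ω σ j) x))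
      + (∑ ρ, ∑ σ, c τ ρ σ * (pd i (ω ρ j) x * ω σ k x + ω ρ j x * pd i (ω σ k) x))
      + (∑ ρ, ∑ σ, c τ ρ σ * (pd j (ω ρ k) x * ω σ i x + ω ρ k x * pd j (ω σ i) x)) = 0 := by
    intro τ i j k
    rw [← step2 τ i j k, ← step2 τ j k i, ← step2 τ k i j]
    have s1 := pd_symm (x := x) (i := i) (k := k) (hC2 τ j)
    have s2 := pd_symm (x := x) (i := j) (k := i) (hC2 τ k)
    have s3 := pd_symm (x := x) (i := k) (k := j) (hC2 τ i)
    linarith [s1, s2, s3]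
  -- Skew-symmetry swap for double sums.
  have hswap' : ∀ (τ : Fin n) (P Q : Fin n → ℝ),
      (∑ ρ, ∑ σ, c τ ρ σ * (P ρ * Q σ)) = -(∑ ρ, ∑ σ, c τ ρ σ * (Q ρ * P σ)) := by
    intro τ P Q
    rw [Finset.sum_comm, ← Finset.sum_neg_distrib]
    refine Finset.sum_congr rfl fun s _ => ?_
    rw [← Finset.sum_neg_distrib]
    refine Finset.sum_congr rfl fun t _ => ?_
    rw [hcskew τ t s]
    ring
  -- Step 5: rewrite the cyclic identity using only antisymmetrized derivatives.
  have step5 : ∀ τ i j k,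
      (∑ ρ, ∑ σ, c τ ρ σ *
        ((pd k (ω ρ i) x - pd i (ω ρ k) x) * ω σ j x
          + (pd i (ω ρ j) x - pd j (ω ρ i) x) * ω σ k x
          + (pd j (ω ρ k) x - pd k (ω ρ j) x) * ω σ i x)) = 0 := by
    intro τ i j k
    have h := hcyc τ i j k
    simp only [mul_add, Finset.sum_add_distrib] at h
    have e2 : (∑ ρ, ∑ σ, c τ ρ σ * (ω ρ i x * pd k (ω σ j) x))
        = -(∑ ρ, ∑ σ, c τ ρ σ * (pd k (ω ρ j) x * ω σ i x)) := hswap' τ _ _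
    have e4 : (∑ ρ, ∑ σ, c τ ρ σ * (ω ρ j x * pd i (ω σ k) x))
        = -(∑ ρ, ∑ σ, c τ ρ σ * (pd i (ω ρ k) x * ω σ j x)) := hswap' τ _ _
    have e6 : (∑ ρ, ∑ σ, c τ ρ σ * (ω ρ k x * pd j (ω σ i) x))
        = -(∑ ρ, ∑ σ, c τ ρ σ * (pd j (ω ρ i) x * ω σ k x)) := hswap' τ _ _
    simp only [mul_add, sub_mul, mul_sub, Finset.sum_add_distrib, Finset.sum_sub_distrib]
    linarith [h, e2, e4, e6]
  -- Step 6: substitute the MC equations back in.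
  have step6 : ∀ τ i j k,
      (∑ ρ, ∑ σ, c τ ρ σ *
        ((∑ a, ∑ b, c ρ a b * ω a k x * ω b i x) * ω σ j x
          + (∑ a, ∑ b, c ρ a b * ω a i x * ω b j x) * ω σ k x
          + (∑ a, ∑ b, c ρ a b * ω a j x * ω b k x) * ω σ i x)) = 0 := by
    intro τ i j k
    refine Eq.trans (Finset.sum_congr rfl fun ρ _ => Finset.sum_congr rfl fun σ _ => ?_)
      (step5 τ i j k)
    rw [← hMC x hx ρ k i, ← hMC x hx ρ i j, ← hMC x hx ρ j k]
  -- Step 7: the key cubic identity in the coframe.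
  have key : ∀ i j k,
      (∑ a, ∑ b, ∑ e, jacExpr c l a b e * ω a i x * ω b j x * ω e k x) = 0 := by
    intro i j k
    have h := step6 l i j k
    simp only [mul_add, Finset.sum_add_distrib] at h
    rw [reorg c l (fun a => ω a k x) (fun b => ω b i x) (fun e => ω e j x),
      reorg c l (fun a => ω a i x) (fun b => ω b j x) (fun e => ω e k x),
      reorg c l (fun a => ω a j x) (fun b => ω b k x) (fun e => ω e i x)] at h
    have rotA : (∑ a, ∑ b, ∑ e, (∑ ρ, c l ρ e * c ρ a b) * ω a k x * ω b i x * ω e j x)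
        = ∑ a, ∑ b, ∑ e, (∑ ρ, c l ρ b * c ρ e a) * ω a i x * ω b j x * ω e k x := by
      refine (sum_rot _).trans ?_
      exact Finset.sum_congr rfl fun a _ => Finset.sum_congr rfl fun b _ =>
        Finset.sum_congr rfl fun e _ => by ring
    have rotC : (∑ a, ∑ b, ∑ e, (∑ ρ, c l ρ e * c ρ a b) * ω a j x * ω b k x * ω e i x)
        = ∑ a, ∑ b, ∑ e, (∑ ρ, c l ρ a * c ρ b e) * ω a i x * ω b j x * ω e k x := by
      refine ((sum_rot _).trans (sum_rot _)).trans ?_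
      exact Finset.sum_congr rfl fun a _ => Finset.sum_congr rfl fun b _ =>
        Finset.sum_congr rfl fun e _ => by ring
    rw [rotA, rotC] at h
    have expand : (∑ a, ∑ b, ∑ e, jacExpr c l a b e * ω a i x * ω b j x * ω e k x)
        = (∑ a, ∑ b, ∑ e, (∑ ρ, c l ρ b * c ρ e a) * ω a i x * ω b j x * ω e k x)
          + (∑ a, ∑ b, ∑ e, (∑ ρ, c l ρ e * c ρ a b) * ω a i x * ω b j x * ω e k x)
          + (∑ a, ∑ b, ∑ e, (∑ ρ, c l ρ a * c ρ b e) * ω a i x * ω b j x * ω e k x) := by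
      simp only [← Finset.sum_add_distrib]
      refine Finset.sum_congr rfl fun a _ => Finset.sum_congr rfl fun b _ =>
        Finset.sum_congr rfl fun e _ => ?_
      unfold jacExpr
      rw [Finset.sum_add_distrib, Finset.sum_add_distrib]
      ring
    rw [expand]
    linarith [h]
  -- Step 8: cancel the invertible coframe matrix, slot by slot.
  have hM := hωinv x hx
  have hMN := hM.mul_val_inv
  have c1 : ∀ i j e, (∑ a, ∑ b, jacExpr c l a b e * ω a i x * ω b j x) = 0 := by
    intro i j e
    refine cancel hMN (f := fun e => ∑ a, ∑ b, jacExpr c l a b e * ω a i x * ω b j x) ?_ e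
    intro k
    have e1 : (∑ e, (∑ a, ∑ b, jacExpr c l a b e * ω a i x * ω b j x)
          * (Matrix.of fun τ i => ω τ i x) e k)
        = ∑ e, ∑ a, ∑ b, jacExpr c l a b e * ω a i x * ω b j x * ω e k x := by
      refine Finset.sum_congr rfl fun e _ => ?_
      rw [Finset.sum_mul]
      refine Finset.sum_congr rfl fun a _ => ?_
      rw [Finset.sum_mul]
      exact Finset.sum_congr rfl fun b _ => rfl
    exact (e1.trans (sum_rot _)).trans (key i j k)
  have c2 : ∀ i e b, (∑ a, jacExpr c l a b e * ω a i x) = 0 := by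
    intro i e b
    refine cancel hMN (f := fun b => ∑ a, jacExpr c l a b e * ω a i x) ?_ b
    intro j
    have e1 : (∑ b, (∑ a, jacExpr c l a b e * ω a i x) * (Matrix.of fun τ i => ω τ i x) b j)
        = ∑ b, ∑ a, jacExpr c l a b e * ω a i x * ω b j x := by
      refine Finset.sum_congr rfl fun b _ => ?_
      rw [Finset.sum_mul]
      exact Finset.sum_congr rfl fun a _ => rfl
    exact (e1.trans Finset.sum_comm).trans (c1 i j e)
  have c3 : jacExpr c l p q r = 0 := by
    refine cancel hMN (f := fun a => jacExpr c l a q r) ?_ p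
    intro i
    exact c2 i r q
  exact c3
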